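/- arXiv:1509.06849 — 5 statements merged into one kernel-verified Lean document; each statement's English description precedes it below -/
import Mathlib

section
/- Let A be an invertible m×m matrix with entries in {0,1} such that every row of A has at most two non-zero entries. Then every entry of A⁻¹ belongs to {0, 1, -1, 1/2, -1/2}. -/
open Matrix Finset Function

lemma alt_ind_sum {α : Type*} [DecidableEq α] (σ : Equiv.Perm α)
    (i j : α) {N : ℕ} (hNodd : Odd N) (hfix : (σ ^ N) i = i) :
    (∑ k ∈ Finset.range N, (-1 : ℚ)^k * (if (σ^k) i = j then 1 else 0)) ∈ ({0,1,-1} : Set ℚ) := by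
  set L := Function.minimalPeriod (⇑σ) i with hLdef
  have hper : Function.IsPeriodicPt (⇑σ) N i := by
    rwa [Function.IsPeriodicPt, Function.IsFixedPt, ← Equiv.Perm.coe_pow]
  have hLdvd : L ∣ N := hper.minimalPeriod_dvd
  have hN0 : N ≠ 0 := by rintro rfl; simpa using hNodd
  have hLodd : Odd L := hNodd.of_dvd_nat hLdvd  -- maybe wrong name
  obtain ⟨t, hNt⟩ := hLdvd
  have htodd : Odd t := (Nat.odd_mul.mp (hNt ▸ hNodd)).2
  have hL0 : L ≠ 0 := by rintro h; rw [h, zero_mul] at hNt; exact hN0 hNt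
  set w : ℚ := ∑ a ∈ Finset.range L, (-1 : ℚ)^a * (if (σ^a) i = j then 1 else 0) with hw
  have key : ∀ s : ℕ, ∑ k ∈ Finset.range (L * s), (-1 : ℚ)^k * (if (σ^k) i = j then 1 else 0)
      = (∑ u ∈ Finset.range s, (-1:ℚ)^u) * w := by
    intro s
    induction s with
    | zero => simp
    | succ s ih =>
      have hLs : (σ ^ (L * s)) i = i := by
        have : Function.IsPeriodicPt (⇑σ) (L * s) i :=
          (Function.isPeriodicPt_minimalPeriod (⇑σ) i).mul_const s
        rwa [Function.IsPeriodicPt, Function.IsFixedPt, ← Equiv.Perm.coe_pow] at this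
      rw [Nat.mul_succ, Finset.sum_range_add, ih, Finset.sum_range_succ]
      have : ∀ a, (-1:ℚ)^(L*s + a) * (if (σ^(L*s + a)) i = j then 1 else 0)
          = (-1:ℚ)^s * ((-1:ℚ)^a * (if (σ^a) i = j then 1 else 0)) := by
        intro a
        have h1 : (σ ^ (L*s + a)) i = (σ^a) i := by
          rw [add_comm, pow_add]; simp [hLs]
        have h2 : (-1:ℚ)^(L*s + a) = (-1:ℚ)^s * (-1:ℚ)^a := by
          rw [pow_add, pow_mul, hLodd.neg_one_pow]  -- ((-1)^L)^s
        rw [h1, h2]; ring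
      simp_rw [this, ← Finset.mul_sum, ← hw]; ring
  rw [hNt, key t, neg_one_geom_sum, if_neg (Nat.not_even_iff_odd.mpr htodd), one_mul]
  -- now show w ∈ {0,1,-1}
  have hsub : w = ∑ a ∈ (Finset.range L).filter (fun a => (σ^a) i = j), (-1:ℚ)^a := by
    rw [hw, Finset.sum_filter]
    exact Finset.sum_congr rfl (fun a _ => by split <;> simp
      )
  have hcard : ((Finset.range L).filter (fun a => (σ^a) i = j)).card ≤ 1 := by
    rw [Finset.card_le_one]
    intro a ha b hb
    simp only [Finset.mem_filter, Finset.mem_range] at ha hb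
    have := Function.iterate_injOn_Iio_minimalPeriod (f := ⇑σ) (x := i)
    refine this (Set.mem_Iio.mpr ha.1) (Set.mem_Iio.mpr hb.1) ?_
    simp only [← Equiv.Perm.coe_pow]
    rw [ha.2, hb.2]
  interval_cases h : ((Finset.range L).filter (fun a => (σ^a) i = j)).card
  · rw [Finset.card_eq_zero] at h
    rw [hsub, h]; simp
  · rw [Finset.card_eq_one] at h
    obtain ⟨a0, ha0⟩ := h
    rw [hsub, ha0, Finset.sum_singleton]
    rcases Nat.even_or_odd a0 with he | ho
    · right; left; simp [he.neg_one_pow]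
    · right; right; simp [ho.neg_one_pow]

lemma ker_aux {m : ℕ} (σ : Equiv.Perm (Fin m)) (x k : Fin m) (L' : ℕ) (hodd : Odd L')
    (hLx : (σ^(L'+1)) x = x) :
    (∑ t ∈ Finset.range (L'+1), (-1:ℚ)^t * (if (σ^t) x = σ k then 1 else 0))
      = - ∑ t ∈ Finset.range (L'+1), (-1:ℚ)^t * (if (σ^t) x = k then 1 else 0) := by
  rw [Finset.sum_range_succ' (fun t => (-1:ℚ)^t * (if (σ^t) x = σ k then 1 else 0)) L']
  rw [Finset.sum_range_succ (fun t => (-1:ℚ)^t * (if (σ^t) x = k then 1 else 0)) L']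
  have hs : σ ((σ^L') x) = x := by
    have : (σ^(L'+1)) x = σ ((σ^L') x) := by rw [pow_succ']; rfl
    rw [← this, hLx]
  have hb : ∀ t, (-1:ℚ)^(t+1) * (if (σ^(t+1)) x = σ k then 1 else 0)
      = -((-1:ℚ)^t * (if (σ^t) x = k then 1 else 0)) := by
    intro t
    have h1 : (σ^(t+1)) x = σ ((σ^t) x) := by rw [pow_succ']; rfl
    rw [h1, pow_succ]
    simp only [EmbeddingLike.apply_eq_iff_eq]
    ring
  simp_rw [hb]
  have hb0 : (if ((σ^(0:ℕ)) x : Fin m) = σ k then (1:ℚ) else 0)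
      = (if (σ^L') x = k then 1 else 0) := by
    have : (((σ^(0:ℕ)) x : Fin m) = σ k) = ((σ^L') x = k) := by
      simp only [pow_zero, Equiv.Perm.coe_one, id_eq]
      rw [← hs, σ.injective.eq_iff]
      simp [hs]
    exact if_congr (iff_of_eq this) rfl rfl
  rw [hb0, pow_zero, one_mul, hodd.neg_one_pow]
  rw [Finset.sum_neg_distrib]
  ring

lemma periods_odd {m : ℕ} (σ : Equiv.Perm (Fin m))
    (h : (1 + σ.permMatrix ℚ).det ≠ 0) (x : Fin m) : Odd (Function.minimalPeriod (⇑σ) x) := by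
  obtain ⟨L, hLdef⟩ : ∃ L, Function.minimalPeriod (⇑σ) x = L := ⟨_, rfl⟩
  rw [hLdef]
  have hLpos : 0 < L := by
    rw [← hLdef]
    refine Function.IsPeriodicPt.minimalPeriod_pos (n := orderOf σ) (orderOf_pos σ) ?_
    rw [Function.IsPeriodicPt, Function.IsFixedPt, ← Equiv.Perm.coe_pow, pow_orderOf_eq_one]
    rfl
  by_contra hodd
  have hLeven : Even L := Nat.not_odd_iff_even.mp hodd
  have hCapp : ∀ i j, (σ.permMatrix ℚ) i j = if σ i = j then 1 else 0 := by
    intro i j; simp [Equiv.Perm.permMatrix, PEquiv.toMatrix_apply, Equiv.toPEquiv]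
  have hLx : (σ ^ L) x = x := by
    have := Function.iterate_minimalPeriod (f := ⇑σ) (x := x)
    rw [hLdef] at this
    rwa [← Equiv.Perm.coe_pow] at this
  set v : Fin m → ℚ := fun k => ∑ t ∈ Finset.range L, (-1:ℚ)^t * (if (σ^t) x = k then 1 else 0)
    with hv
  have hvx : v x = 1 := by
    show (∑ t ∈ Finset.range L, (-1:ℚ)^t * (if (σ^t) x = x then 1 else 0)) = 1
    rw [Finset.sum_eq_single 0]
    · simp
    · intro t ht ht0
      rw [Finset.mem_range] at ht
      have : (σ^t) x ≠ x := by
        intro heq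
        have hdvd : L ∣ t := by
          rw [← hLdef]
          exact Function.IsPeriodicPt.minimalPeriod_dvd
            (by rwa [Function.IsPeriodicPt, Function.IsFixedPt, ← Equiv.Perm.coe_pow])
        have := Nat.le_of_dvd (Nat.pos_of_ne_zero ht0) hdvd
        omega
      simp [this]
    · intro h0
      simp only [Finset.mem_range] at h0
      omega
  have hneg : ∀ k, v (σ k) = - v k := by
    intro k
    obtain ⟨L'', hL''⟩ : ∃ L'', L = L'' + 1 := ⟨L - 1, by omega⟩
    have hL''odd : Odd L'' := by
      rcases hLeven with ⟨u, hu⟩; exact ⟨u - 1, by omega⟩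
    show (∑ t ∈ Finset.range L, (-1:ℚ)^t * (if (σ^t) x = σ k then 1 else 0))
      = - ∑ t ∈ Finset.range L, (-1:ℚ)^t * (if (σ^t) x = k then 1 else 0)
    rw [hL'']
    exact ker_aux σ x k L'' hL''odd (by rw [← hL'']; exact hLx)
  have hker : (1 + σ.permMatrix ℚ) *ᵥ v = 0 := by
    funext k
    have h1 : ((1 + σ.permMatrix ℚ) *ᵥ v) k = v k + ((σ.permMatrix ℚ) *ᵥ v) k := by
      rw [Matrix.add_mulVec, Matrix.one_mulVec]; rfl
    have h2 : ((σ.permMatrix ℚ) *ᵥ v) k = v (σ k) := by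
      simp only [Matrix.mulVec, dotProduct, hCapp, ite_mul, one_mul, zero_mul]
      exact (Finset.sum_ite_eq Finset.univ (σ k) v).trans (if_pos (Finset.mem_univ _))
    rw [h1, h2, hneg k]
    simp
  exact h ((Matrix.exists_mulVec_eq_zero_iff).mp ⟨v, fun h0 => by simp [h0] at hvx, hker⟩)

section
variable {m : ℕ}

lemma permMatrix_apply (σ : Equiv.Perm (Fin m)) (i j : Fin m) :
    (σ.permMatrix ℚ) i j = if σ i = j then 1 else 0 := by
  simp [Equiv.Perm.permMatrix, PEquiv.toMatrix_apply, Equiv.toPEquiv]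

lemma permMatrix_mul (σ τ : Equiv.Perm (Fin m)) :
    (σ.permMatrix ℚ) * (τ.permMatrix ℚ) = (τ * σ).permMatrix ℚ := by
  show σ.toPEquiv.toMatrix * τ.toPEquiv.toMatrix = _
  rw [← PEquiv.toMatrix_trans, ← Equiv.toPEquiv_trans]
  rfl

lemma permMatrix_one : ((1 : Equiv.Perm (Fin m)).permMatrix ℚ) = 1 := by
  show (Equiv.refl (Fin m)).toPEquiv.toMatrix = 1
  rw [Equiv.toPEquiv_refl, PEquiv.toMatrix_refl]

lemma permMatrix_pow (σ : Equiv.Perm (Fin m)) (k : ℕ) :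
    (σ.permMatrix ℚ) ^ k = (σ ^ k).permMatrix ℚ := by
  induction k with
  | zero => simp [permMatrix_one]
  | succ k ih =>
    rw [pow_succ, ih, permMatrix_mul, ← pow_succ']

end

lemma one_add_perm_inv {m : ℕ} (σ : Equiv.Perm (Fin m))
    (h : (1 + σ.permMatrix ℚ).det ≠ 0) (i j : Fin m) :
    (1 + σ.permMatrix ℚ)⁻¹ i j ∈ ({0, 1/2, -1/2} : Set ℚ) := by
  set C := σ.permMatrix ℚ with hC
  set N := Finset.univ.lcm (fun x : Fin m => Function.minimalPeriod (⇑σ) x) with hN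
  have hNodd : Odd N := by
    have hdvd : N ∣ ∏ x : Fin m, Function.minimalPeriod (⇑σ) x :=
      Finset.lcm_dvd (fun b _ => Finset.dvd_prod_of_mem _ (Finset.mem_univ b))
    have hprod : Odd (∏ x : Fin m, Function.minimalPeriod (⇑σ) x) := by
      refine Finset.prod_induction _ Odd (fun a b ha hb => ha.mul hb) odd_one ?_
      intro x _
      exact periods_odd σ h x
    exact hprod.of_dvd_nat hdvd
  have hσN : σ ^ N = 1 := by
    ext x
    have hdvd : Function.minimalPeriod (⇑σ) x ∣ N := Finset.dvd_lcm (Finset.mem_univ x)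
    obtain ⟨c, hc⟩ := hdvd
    have : Function.IsPeriodicPt (⇑σ) N x := by
      rw [hc]
      exact (Function.isPeriodicPt_minimalPeriod (⇑σ) x).mul_const c
    rw [Function.IsPeriodicPt, Function.IsFixedPt, ← Equiv.Perm.coe_pow] at this
    simp [this]
  have hCN : C ^ N = 1 := by rw [hC, permMatrix_pow, hσN, permMatrix_one]
  set S := ∑ k ∈ Finset.range N, (-C)^k with hS
  have hS2 : S * (1 + C) = 1 + 1 := by
    have hg := geom_sum_mul (-C) N
    rw [hNodd.neg_pow, hCN] at hg
    have h2 : -C - 1 = -(1 + C) := by abel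
    rw [h2, mul_neg] at hg
    calc S * (1 + C) = -(-((∑ i ∈ Finset.range N, (-C) ^ i) * (1 + C))) := by
          rw [neg_neg, hS]
      _ = -(-1 - 1) := by rw [hg]
      _ = 1 + 1 := by abel
  set B := (2:ℚ)⁻¹ • S with hB
  have hBM : B * (1 + C) = 1 := by
    rw [hB, smul_mul_assoc, hS2]
    have h11 : (1 + 1 : Matrix (Fin m) (Fin m) ℚ) = (2:ℚ) • 1 := by
      ext a b
      by_cases hab : a = b <;>
        simp [Matrix.add_apply, Matrix.one_apply, hab] <;> norm_num
    rw [h11, smul_smul]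
    norm_num
  rw [Matrix.inv_eq_left_inv hBM]
  have hBapp : B i j = (2:ℚ)⁻¹ * ∑ k ∈ Finset.range N, (-1:ℚ)^k * (if (σ^k) i = j then 1 else 0) := by
    rw [hB, Matrix.smul_apply, hS, Matrix.sum_apply]
    congr 1
    refine Finset.sum_congr rfl (fun k _ => ?_)
    have h1 : (-C)^k = (-1:ℚ)^k • (C^k) := by
      rw [show -C = (-1:ℚ) • C by simp, smul_pow]
    rw [h1, Matrix.smul_apply, hC, permMatrix_pow, permMatrix_apply]
    rfl
  rw [hBapp]
  have hmem := alt_ind_sum σ i j hNodd (by rw [hσN]; rfl)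
  simp only [Set.mem_insert_iff, Set.mem_singleton_iff] at hmem ⊢
  rcases hmem with h0 | h1 | hm1
  · rw [h0]; left; ring
  · rw [h1]; right; left; norm_num
  · rw [hm1]; right; right; norm_num

-- Regular case as a standalone lemma
lemma regular_case {m : ℕ} (A : Matrix (Fin m) (Fin m) ℚ)
    (h01 : ∀ i j, A i j = 0 ∨ A i j = 1)
    (hrow : ∀ i, (Finset.univ.filter fun j => A i j ≠ 0).card ≤ 2)
    (hdet : A.det ≠ 0)
    (hcol2 : ∀ c, 2 ≤ (Finset.univ.filter fun r => A r c ≠ 0).card) :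
    ∀ i j, A⁻¹ i j ∈ ({0, 1, -1, 1/2, -1/2} : Set ℚ) := by
  -- double counting: all row and column degrees are exactly 2
  have hsum : (∑ c : Fin m, (Finset.univ.filter fun r => A r c ≠ 0).card)
      = ∑ r : Fin m, (Finset.univ.filter fun c => A r c ≠ 0).card := by
    simp_rw [Finset.card_filter]
    exact Finset.sum_comm
  have h1 : (∑ r : Fin m, (Finset.univ.filter fun c => A r c ≠ 0).card) ≤ m * 2 := by
    calc (∑ r : Fin m, (Finset.univ.filter fun c => A r c ≠ 0).card)
        ≤ ∑ _r : Fin m, 2 := Finset.sum_le_sum (fun r _ => hrow r)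
      _ = m * 2 := by simp [Finset.sum_const, Finset.card_univ]
  have h2 : m * 2 ≤ (∑ c : Fin m, (Finset.univ.filter fun r => A r c ≠ 0).card) := by
    calc m * 2 = ∑ _c : Fin m, 2 := by simp [Finset.sum_const, Finset.card_univ]
      _ ≤ _ := Finset.sum_le_sum (fun c _ => hcol2 c)
  have hrowsum : (∑ r : Fin m, (Finset.univ.filter fun c => A r c ≠ 0).card) = ∑ _r : Fin m, 2 := by
    have := hsum ▸ h2
    have h3 : (∑ r : Fin m, (Finset.univ.filter fun c => A r c ≠ 0).card) = m * 2 := le_antisymm h1 this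
    simp [h3, Finset.sum_const, Finset.card_univ]
  have hrow2 : ∀ r, (Finset.univ.filter fun c => A r c ≠ 0).card = 2 := by
    intro r
    have := (Finset.sum_eq_sum_iff_of_le (fun i _ => hrow i)).mp hrowsum
    exact this r (Finset.mem_univ r)
  have hcolsum : (∑ _c : Fin m, 2) = (∑ c : Fin m, (Finset.univ.filter fun r => A r c ≠ 0).card) := by
    rw [hsum, hrowsum]
  have hcol2' : ∀ c, (Finset.univ.filter fun r => A r c ≠ 0).card = 2 := by
    intro c
    exact ((Finset.sum_eq_sum_iff_of_le (fun c _ => hcol2 c)).mp hcolsum c (Finset.mem_univ c)).symm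
  -- find permutation p in the support
  have hperm : ∃ p : Equiv.Perm (Fin m), ∀ i, A i (p i) ≠ 0 := by
    by_contra hno
    push_neg at hno
    apply hdet
    rw [Matrix.det_apply]
    apply Finset.sum_eq_zero
    intro σ _
    obtain ⟨i, hi⟩ := hno σ⁻¹
    have hz : A (σ (σ⁻¹ i)) (σ⁻¹ i) = 0 := by
      rw [show σ (σ⁻¹ i) = i from σ.apply_symm_apply i]
      simpa using hi
    have hprod : (∏ i : Fin m, A (σ i) i) = 0 := Finset.prod_eq_zero (Finset.mem_univ (σ⁻¹ i)) hz
    rw [hprod, smul_zero]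
  obtain ⟨p, hp0⟩ := hperm
  have hp1 : ∀ i, A i (p i) = 1 := fun i => (h01 i (p i)).resolve_left (hp0 i)
  -- the second permutation
  have hex : ∀ i, ∃ b, ((Finset.univ.filter fun l => A i l ≠ 0).erase (p i)) = {b} := by
    intro i
    apply Finset.card_eq_one.mp
    rw [Finset.card_erase_of_mem (by simp [hp0 i]), hrow2 i]
  choose q0 hq0 using hex
  have hq0mem : ∀ i, q0 i ∈ ((Finset.univ.filter fun l => A i l ≠ 0).erase (p i)) := by
    intro i; rw [hq0 i]; exact Finset.mem_singleton_self _
  have hq0ne : ∀ i, q0 i ≠ p i := fun i => (Finset.mem_erase.mp (hq0mem i)).1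
  have hq0A : ∀ i, A i (q0 i) ≠ 0 := fun i => by
    have := (Finset.mem_erase.mp (hq0mem i)).2
    simpa using this
  have hq0A1 : ∀ i, A i (q0 i) = 1 := fun i => (h01 i (q0 i)).resolve_left (hq0A i)
  have hchar : ∀ i l, A i l ≠ 0 → (l = p i ∨ l = q0 i) := by
    intro i l hl
    by_cases hlp : l = p i
    · exact Or.inl hlp
    · right
      have : l ∈ ((Finset.univ.filter fun l => A i l ≠ 0).erase (p i)) :=
        Finset.mem_erase.mpr ⟨hlp, by simp [hl]⟩
      rw [hq0 i] at this
      exact Finset.mem_singleton.mp this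
  have hq0inj : Function.Injective q0 := by
    intro i1 i2 h12
    by_contra hne
    have hs1 : p.symm (q0 i1) ≠ i1 := by
      intro h
      apply hq0ne i1
      have := congrArg p h
      rwa [p.apply_symm_apply] at this
    have hs2 : p.symm (q0 i1) ≠ i2 := by
      intro h
      apply hq0ne i2
      have := congrArg p h
      rw [p.apply_symm_apply] at this
      rw [← this, h12]
    have hset : {i1, i2, p.symm (q0 i1)} ⊆ (Finset.univ.filter fun r => A r (q0 i1) ≠ 0) := by
      intro z hz
      simp only [Finset.mem_insert, Finset.mem_singleton] at hz
      simp only [Finset.mem_filter, Finset.mem_univ, true_and]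
      rcases hz with rfl | rfl | rfl
      · exact hq0A _
      · rw [h12]; exact hq0A _
      · have := hp0 (p.symm (q0 i1))
        rwa [p.apply_symm_apply] at this
    have hcard3 : ({i1, i2, p.symm (q0 i1)} : Finset (Fin m)).card = 3 := by
      rw [Finset.card_insert_of_notMem, Finset.card_insert_of_notMem, Finset.card_singleton]
      · simp only [Finset.mem_singleton]
        exact fun h => hs2 h.symm
      · simp only [Finset.mem_insert, Finset.mem_singleton]
        push_neg
        exact ⟨hne, fun h => hs1 h.symm⟩
    have := Finset.card_le_card hset
    rw [hcard3, hcol2' (q0 i1)] at this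
    omega
  let q : Equiv.Perm (Fin m) := Equiv.ofBijective q0 (Finite.injective_iff_bijective.mp hq0inj)
  have hqdef : ∀ i, q i = q0 i := fun i => rfl
  set τ : Equiv.Perm (Fin m) := p⁻¹ * q with hτ
  have hptau : ∀ i, p (τ i) = q i := by
    intro i
    simp [hτ, Equiv.Perm.mul_apply]
  set C := τ.permMatrix ℚ with hCdef
  set P := p.permMatrix ℚ with hPdef
  have hAdecomp : A = (1 + C) * P := by
    ext i k
    rw [Matrix.add_mul, Matrix.one_mul, Matrix.add_apply]
    have hCP : (C * P) i k = if q i = k then 1 else 0 := by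
      rw [Matrix.mul_apply]
      simp_rw [hCdef, hPdef, permMatrix_apply, ite_mul, one_mul, zero_mul]
      rw [Finset.sum_ite_eq Finset.univ (τ i) (fun l => if p l = k then (1:ℚ) else 0)]
      rw [if_pos (Finset.mem_univ _), hptau]
    rw [hCP, hPdef, permMatrix_apply]
    by_cases hkp : k = p i
    · rw [hkp, if_pos rfl, if_neg (by rw [hqdef]; exact fun hh => hq0ne i hh), hp1]
      norm_num
    · rw [if_neg (fun hh => hkp hh.symm)]
      by_cases hkq : k = q i
      · rw [if_pos hkq.symm, zero_add, hkq, hqdef, hq0A1]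
      · rw [if_neg (fun hh => hkq hh.symm), add_zero]
        by_cases hz : A i k = 0
        · exact hz
        · rcases hchar i k hz with h | h
          · exact absurd h hkp
          · exact absurd (h.trans (hqdef i).symm) hkq
  have hdetC : (1 + C).det ≠ 0 := by
    intro h0
    rw [hAdecomp, Matrix.det_mul, h0, zero_mul] at hdet
    exact hdet rfl
  have hPinv : P⁻¹ = (p⁻¹).permMatrix ℚ := by
    apply Matrix.inv_eq_left_inv
    rw [hPdef, _root_.permMatrix_mul, mul_inv_cancel, _root_.permMatrix_one]
  intro i j
  have hAinv : A⁻¹ = P⁻¹ * (1 + C)⁻¹ := by rw [hAdecomp, Matrix.mul_inv_rev]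
  have happ : A⁻¹ i j = (1 + C)⁻¹ (p⁻¹ i) j := by
    rw [hAinv, hPinv, Matrix.mul_apply]
    simp_rw [permMatrix_apply, ite_mul, one_mul, zero_mul]
    rw [Finset.sum_ite_eq Finset.univ (p⁻¹ i) (fun l => (1+C)⁻¹ l j), if_pos (Finset.mem_univ _)]
  rw [happ]
  have := one_add_perm_inv τ hdetC (p⁻¹ i) j
  simp only [Set.mem_insert_iff, Set.mem_singleton_iff] at this ⊢
  tauto

lemma neg_mem_S5 {s : ℚ} (h : s ∈ ({0, 1, -1, 1/2, -1/2} : Set ℚ)) :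
    -s ∈ ({0, 1, -1, 1/2, -1/2} : Set ℚ) := by
  simp only [Set.mem_insert_iff, Set.mem_singleton_iff] at h ⊢
  rcases h with h|h|h|h|h <;> rw [h] <;> norm_num

lemma main_lemma (m : ℕ) : ∀ (A : Matrix (Fin m) (Fin m) ℚ),
    (∀ i j, A i j = 0 ∨ A i j = 1) →
    (∀ i, (Finset.univ.filter fun j => A i j ≠ 0).card ≤ 2) →
    A.det ≠ 0 →
    ∀ (x : Fin m → ℚ) (j : Fin m),
      (A *ᵥ x) = (fun k => if k = j then 1 else 0) →
      ∀ i, x i ∈ ({0, 1, -1, 1/2, -1/2} : Set ℚ) := by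
  induction m using Nat.strong_induction_on with
  | _ m IH =>
  intro A h01 hrow hdet x j hx i
  have hxrow : ∀ k, (∑ l, A k l * x l) = if k = j then 1 else 0 := by
    intro k
    have := congrFun hx k
    rwa [Matrix.mulVec, dotProduct] at this
  by_cases hleaf : ∃ c : Fin m, (Finset.univ.filter fun r => A r c ≠ 0).card = 1
  · -- leaf case
    obtain ⟨c, hc⟩ := hleaf
    obtain ⟨r, hr⟩ := Finset.card_eq_one.mp hc
    have hrmem : A r c ≠ 0 := by
      have : r ∈ (Finset.univ.filter fun r => A r c ≠ 0) := by
        rw [hr]; exact Finset.mem_singleton_self _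
      simpa using this
    have hArc : A r c = 1 := (h01 r c).resolve_left hrmem
    have hcol0 : ∀ i', i' ≠ r → A i' c = 0 := by
      intro i' hi'
      by_contra h0
      have : i' ∈ (Finset.univ.filter fun r => A r c ≠ 0) := by simp [h0]
      rw [hr, Finset.mem_singleton] at this
      exact hi' this
    have hm0 : m ≠ 0 := fun h => (h ▸ c).elim0
    obtain ⟨n, rfl⟩ := Nat.exists_eq_succ_of_ne_zero hm0
    set A' : Matrix (Fin n) (Fin n) ℚ := A.submatrix r.succAbove c.succAbove with hA'
    have h01' : ∀ i' k, A' i' k = 0 ∨ A' i' k = 1 := fun i' k => h01 _ _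
    have hrow' : ∀ i', (Finset.univ.filter fun k => A' i' k ≠ 0).card ≤ 2 := by
      intro i'
      refine le_trans (Finset.card_le_card_of_injOn c.succAbove ?_ ?_) (hrow (r.succAbove i'))
      · intro k hk
        simp only [Finset.coe_filter, Finset.mem_coe, Finset.mem_filter, Finset.mem_univ, true_and, Set.mem_setOf_eq] at hk ⊢
        exact hk
      · exact fun a _ b _ hab => (Fin.succAbove_right_injective (p := c)) hab
    have hdet' : A'.det ≠ 0 := by
      have hexp := Matrix.det_succ_column A c
      rw [Finset.sum_eq_single r (fun b _ hb => by
        rw [hcol0 b hb, mul_zero, zero_mul]) (fun h => absurd (Finset.mem_univ r) h)] at hexp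
      intro h0
      rw [hA'] at h0
      rw [h0, mul_zero] at hexp
      exact hdet hexp
    set x' : Fin n → ℚ := fun k => x (c.succAbove k) with hx'
    have hsplit : ∀ i' : Fin n, (∑ k, A' i' k * x' k) = (if r.succAbove i' = j then 1 else 0) := by
      intro i'
      have h := hxrow (r.succAbove i')
      rw [Fin.sum_univ_succAbove (fun l => A (r.succAbove i') l * x l) c] at h
      rw [hcol0 _ (Fin.succAbove_ne r i'), zero_mul, zero_add] at h
      exact h
    by_cases hjr : j = r
    · -- the deleted row is the special one
      have hx'0 : A' *ᵥ x' = 0 := by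
        funext i'
        show (∑ k, A' i' k * x' k) = 0
        rw [hsplit i', if_neg (fun h => (Fin.succAbove_ne r i') (h.trans hjr))]
      have hx'zero : x' = 0 := by
        have h1 : A'⁻¹ *ᵥ (A' *ᵥ x') = x' := by
          rw [Matrix.mulVec_mulVec, Matrix.nonsing_inv_mul A' (isUnit_iff_ne_zero.mpr hdet'),
            Matrix.one_mulVec]
        rw [hx'0, Matrix.mulVec_zero] at h1
        exact h1.symm
      by_cases hic : i = c
      · have h := hxrow r
        rw [if_pos hjr.symm] at h
        rw [Fin.sum_univ_succAbove (fun l => A r l * x l) c] at h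
        have hzero : (∑ k, A r (c.succAbove k) * x (c.succAbove k)) = 0 := by
          apply Finset.sum_eq_zero
          intro k _
          have hxk : x' k = 0 := by rw [hx'zero]; rfl
          rw [show x (c.succAbove k) = x' k from rfl, hxk, mul_zero]
        rw [hzero, add_zero, hArc, one_mul] at h
        rw [hic, h]
        right; left; rfl
      · obtain ⟨k, hk⟩ := Fin.exists_succAbove_eq (show i ≠ c from hic)
        have hxk : x' k = 0 := by rw [hx'zero]; rfl
        rw [← hk, show x (c.succAbove k) = x' k from rfl, hxk]
        left; rfl
    · -- the deleted row is not the special one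
      obtain ⟨j', hj'⟩ := Fin.exists_succAbove_eq (show j ≠ r from hjr)
      have hx'eq : A' *ᵥ x' = (fun k => if k = j' then 1 else 0) := by
        funext i'
        show (∑ k, A' i' k * x' k) = _
        rw [hsplit i']
        congr 1
        rw [← hj']
        simp only [eq_iff_iff]
        exact ⟨fun h => (Fin.succAbove_right_injective (p := r)) h,
          fun h => by rw [h]⟩
      have hIH := IH n (Nat.lt_succ_self n) A' h01' hrow' hdet' x' j' hx'eq
      by_cases hic : i = c
      · subst hic
        have h := hxrow r
        rw [Fin.sum_univ_succAbove (fun l => A r l * x l) i, if_neg (fun h => hjr h.symm),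
          hArc, one_mul] at h
        -- h : x i + ∑ k, A r (i.succAbove k) * x (i.succAbove k) = 0
        have hT : (∑ k, A r (i.succAbove k) * x (i.succAbove k))
            ∈ ({0, 1, -1, 1/2, -1/2} : Set ℚ) := by
          have hcard1 : ((Finset.univ.filter fun k => A r (i.succAbove k) ≠ 0)).card ≤ 1 := by
            have hsubs : ∀ k ∈ (Finset.univ.filter fun k => A r (i.succAbove k) ≠ 0),
                i.succAbove k ∈ (Finset.univ.filter fun l => A r l ≠ 0).erase i := by
              intro k hk
              simp only [Finset.mem_filter, Finset.mem_univ, true_and] at hk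
              exact Finset.mem_erase.mpr ⟨Fin.succAbove_ne i k, by simp [hk]⟩
            have := Finset.card_le_card_of_injOn i.succAbove hsubs
              (fun a _ b _ hab => (Fin.succAbove_right_injective (p := i)) hab)
            have hce : ((Finset.univ.filter fun l => A r l ≠ 0).erase i).card
                = (Finset.univ.filter fun l => A r l ≠ 0).card - 1 :=
              Finset.card_erase_of_mem (by simp [hrmem])
            have := hce ▸ this
            have hr2 := hrow r
            omega
          rcases Nat.le_one_iff_eq_zero_or_eq_one.mp hcard1 with h0 | h1
          · rw [Finset.card_eq_zero] at h0
            have : (∑ k, A r (i.succAbove k) * x (i.succAbove k)) = 0 := by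
              apply Finset.sum_eq_zero
              intro k _
              have : ¬ (A r (i.succAbove k) ≠ 0) := by
                intro hk
                have : k ∈ (Finset.univ.filter fun k => A r (i.succAbove k) ≠ 0) := by simp [hk]
                rw [h0] at this
                exact absurd this (Finset.notMem_empty k)
              rw [not_not.mp this, zero_mul]
            rw [this]; left; rfl
          · obtain ⟨k0, hk0⟩ := Finset.card_eq_one.mp h1
            have hsum : (∑ k, A r (i.succAbove k) * x (i.succAbove k))
                = A r (i.succAbove k0) * x (i.succAbove k0) := by
              apply Finset.sum_eq_single k0
              · intro b _ hb
                have : b ∉ (Finset.univ.filter fun k => A r (i.succAbove k) ≠ 0) := by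
                  rw [hk0]; simp [hb]
                simp only [Finset.mem_filter, Finset.mem_univ, true_and, not_not] at this
                rw [this, zero_mul]
              · intro h; exact absurd (Finset.mem_univ k0) h
            have hk0mem : A r (i.succAbove k0) ≠ 0 := by
              have : k0 ∈ (Finset.univ.filter fun k => A r (i.succAbove k) ≠ 0) := by
                rw [hk0]; exact Finset.mem_singleton_self _
              simpa using this
            rw [hsum, (h01 r (i.succAbove k0)).resolve_left hk0mem, one_mul]
            exact hIH k0
        have : x i = -(∑ k, A r (i.succAbove k) * x (i.succAbove k)) := by linarith [h]
        rw [this]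
        exact neg_mem_S5 hT
      · obtain ⟨k, hk⟩ := Fin.exists_succAbove_eq (show i ≠ c from hic)
        rw [← hk]
        exact hIH k
  · -- regular case
    push_neg at hleaf
    have hcol2 : ∀ c, 2 ≤ (Finset.univ.filter fun r => A r c ≠ 0).card := by
      intro c
      have hne1 := hleaf c
      have hge1 : 1 ≤ (Finset.univ.filter fun r => A r c ≠ 0).card := by
        by_contra h0
        push_neg at h0
        have hempty : (Finset.univ.filter fun r => A r c ≠ 0) = ∅ := by
          apply Finset.card_eq_zero.mp; omega
        apply hdet
        apply Matrix.det_eq_zero_of_column_eq_zero c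
        intro r
        by_contra hr0
        have : r ∈ (Finset.univ.filter fun r => A r c ≠ 0) := by simp [hr0]
        rw [hempty] at this
        exact absurd this (Finset.notMem_empty r)
      omega
    have hinv := regular_case A h01 hrow hdet hcol2
    have hxi : x i = A⁻¹ i j := by
      have h1 : A⁻¹ *ᵥ (A *ᵥ x) = x := by
        rw [Matrix.mulVec_mulVec, Matrix.nonsing_inv_mul A (isUnit_iff_ne_zero.mpr hdet),
          Matrix.one_mulVec]
      rw [hx] at h1
      rw [← h1]
      show (∑ k, A⁻¹ i k * (if k = j then 1 else 0)) = A⁻¹ i j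
      simp_rw [mul_ite, mul_one, mul_zero]
      rw [Finset.sum_ite_eq' Finset.univ j (fun k => A⁻¹ i k), if_pos (Finset.mem_univ _)]
    rw [hxi]
    exact hinv i j

theorem stmt_0 (m : ℕ) (A : Matrix (Fin m) (Fin m) ℚ)
    (h01 : ∀ i j, A i j = 0 ∨ A i j = 1)
    (hrow : ∀ i, (Finset.univ.filter fun j => A i j ≠ 0).card ≤ 2)
    (hA : IsUnit A.det) :
    ∀ i j, A⁻¹ i j ∈ ({0, 1, -1, 1/2, -1/2} : Set ℚ) := by
  intro i j
  have hdet : A.det ≠ 0 := hA.ne_zero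
  have hx : A *ᵥ (fun l => A⁻¹ l j) = fun k => if k = j then 1 else 0 := by
    funext k
    rw [Matrix.mulVec, dotProduct]
    rw [show (∑ l, A k l * A⁻¹ l j) = (A * A⁻¹) k j from (Matrix.mul_apply).symm,
      Matrix.mul_nonsing_inv A hA, Matrix.one_apply]
  exact main_lemma m A h01 hrow hdet (fun l => A⁻¹ l j) j hx i
end

section
/- Consider the graph G=(V,E) on V={1,...,m} built from an invertible 0-1 matrix A whose every row has exactly two non-zero entries, where each row {j,k} with A_{ij}=A_{ik}=1 gives an edge (j,k). Then G contains no even cycle. -/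
open Finset

lemma my_edges_get {V : Type*} {G : SimpleGraph V} {u v : V} (p : G.Walk u v) :
    ∀ (t : ℕ) (ht : t < p.length),
      p.edges[t]'(by simpa using ht) = s(p.getVert t, p.getVert (t + 1)) := by
  induction p with
  | nil => intro t ht; simp at ht
  | cons h q ih =>
    intro t ht
    cases t with
    | zero =>
      simp [SimpleGraph.Walk.getVert_cons_succ, SimpleGraph.Walk.getVert_zero]
    | succ n =>
      simp only [SimpleGraph.Walk.edges_cons, List.getElem_cons_succ,
        SimpleGraph.Walk.getVert_cons_succ]
      exact ih n (by simpa using ht)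

theorem stmt_2 (m : ℕ) (A : Matrix (Fin m) (Fin m) ℚ)
    (h01 : ∀ i j, A i j = 0 ∨ A i j = 1)
    (hrow : ∀ i, (Finset.univ.filter fun j => A i j ≠ 0).card = 2)
    (hA : IsUnit A.det)
    (G : SimpleGraph (Fin m))
    (hG : ∀ j k, G.Adj j k ↔ j ≠ k ∧ ∃ i, A i j = 1 ∧ A i k = 1) :
    ∀ (v : Fin m) (p : G.Walk v v), p.IsCycle → Odd p.length := by
  intro v p hp
  by_contra hodd
  have hev : Even p.length := Nat.not_odd_iff_even.mp hodd
  set n := p.length with hn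
  have hn3 : 3 ≤ n := hp.three_le_length
  have hn0 : 0 < n := by omega
  set W : ℕ → Fin m := fun t => p.getVert t with hW
  have hadj : ∀ t, t < n → G.Adj (W t) (W (t + 1)) := fun t ht =>
    p.adj_getVert_succ ht
  have hne : ∀ t, t < n → W t ≠ W (t + 1) := fun t ht => (hadj t ht).ne
  -- choose rows
  have hex : ∀ t : ℕ, ∃ i : Fin m, t < n → A i (W t) = 1 ∧ A i (W (t + 1)) = 1 := by
    intro t
    by_cases ht : t < n
    · obtain ⟨-, i, hi⟩ := (hG _ _).mp (hadj t ht)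
      exact ⟨i, fun _ => hi⟩
    · exact ⟨v, fun h => absurd h ht⟩
  choose f hf using hex
  -- the support of row f t is exactly {W t, W (t+1)}
  have hsupp : ∀ t, t < n → ∀ j,
      A (f t) j = (if j = W t then (1:ℚ) else 0) + (if j = W (t + 1) then 1 else 0) := by
    intro t ht j
    obtain ⟨h1, h2⟩ := hf t ht
    have hne' := hne t ht
    have hpair : ({W t, W (t + 1)} : Finset (Fin m)) =
        Finset.univ.filter fun j => A (f t) j ≠ 0 := by
      apply Finset.eq_of_subset_of_card_le
      · intro j hj
        simp only [Finset.mem_insert, Finset.mem_singleton] at hj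
        simp only [Finset.mem_filter, Finset.mem_univ, true_and]
        rcases hj with rfl | rfl
        · rw [h1]; norm_num
        · rw [h2]; norm_num
      · rw [hrow, Finset.card_pair hne']
    by_cases hjt : j = W t
    · subst hjt
      rw [if_pos rfl, if_neg hne', h1]; ring
    · by_cases hjt' : j = W (t + 1)
      · subst hjt'
        rw [if_neg hne'.symm, if_pos rfl, h2]; ring
      · rw [if_neg hjt, if_neg hjt']
        have : j ∉ ({W t, W (t + 1)} : Finset (Fin m)) := by
          simp [hjt, hjt']
        rw [hpair] at this
        simp only [Finset.mem_filter, Finset.mem_univ, true_and, not_not] at this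
        rw [this]; ring
  -- f is injective on [0, n)
  have hinj : ∀ t s, t < n → s < n → f t = f s → t = s := by
    intro t s ht hs hfe
    -- the unordered vertex pairs agree
    have key : s(W t, W (t + 1)) = s(W s, W (s + 1)) := by
      have e1 : A (f t) (W t) = 1 := (hf t ht).1
      have e2 : A (f t) (W (t + 1)) = 1 := (hf t ht).2
      have h1 := hsupp s hs (W t)
      have h2 := hsupp s hs (W (t + 1))
      rw [← hfe, e1] at h1
      rw [← hfe, e2] at h2
      have m1 : W t = W s ∨ W t = W (s + 1) := by
        by_contra hc
        push_neg at hc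
        rw [if_neg hc.1, if_neg hc.2] at h1; norm_num at h1
      have m2 : W (t + 1) = W s ∨ W (t + 1) = W (s + 1) := by
        by_contra hc
        push_neg at hc
        rw [if_neg hc.1, if_neg hc.2] at h2; norm_num at h2
      have hnet := hne t ht
      rw [Sym2.eq_iff]
      rcases m1 with h | h <;> rcases m2 with h' | h'
      · exact absurd (h.trans h'.symm) hnet
      · exact Or.inl ⟨h, h'⟩
      · exact Or.inr ⟨h, h'⟩
      · exact absurd (h.trans h'.symm) hnet
    have hnodup := hp.edges_nodup
    have et := my_edges_get p t ht
    have es := my_edges_get p s hs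
    have : p.edges[t]'(by simpa using ht) = p.edges[s]'(by simpa using hs) := by
      rw [et, es]; exact key
    exact List.Nodup.getElem_inj_iff hnodup |>.mp this
  -- the dependence vector
  set c : Fin m → ℚ := fun i =>
    ∑ t ∈ Finset.range n, (-1 : ℚ) ^ t * (if f t = i then 1 else 0) with hc
  have hc0 : c (f 0) = 1 := by
    show (∑ t ∈ Finset.range n, (-1 : ℚ) ^ t * (if f t = f 0 then 1 else 0)) = 1
    rw [Finset.sum_eq_single_of_mem 0 (Finset.mem_range.mpr hn0)]
    · simp
    · intro t ht htne
      rw [if_neg fun h => htne (hinj t 0 (Finset.mem_range.mp ht) hn0 h)]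
      ring
  have hcne : c ≠ 0 := by
    intro h
    rw [h] at hc0
    simp at hc0
  have hmul : Matrix.vecMul c A = 0 := by
    funext j
    have : Matrix.vecMul c A j = ∑ t ∈ Finset.range n, (-1 : ℚ) ^ t * A (f t) j := by
      simp only [Matrix.vecMul, dotProduct, hc]
      simp_rw [Finset.sum_mul]
      rw [Finset.sum_comm]
      apply Finset.sum_congr rfl
      intro t _
      rw [Finset.sum_eq_single_of_mem (f t) (Finset.mem_univ _)]
      · simp
      · intro i _ hi
        rw [if_neg (Ne.symm hi)]; ring
    rw [this]
    have : ∀ t ∈ Finset.range n, (-1 : ℚ) ^ t * A (f t) j =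
        ((-1 : ℚ) ^ t * (if j = W t then 1 else 0)) -
        ((-1 : ℚ) ^ (t + 1) * (if j = W (t + 1) then 1 else 0)) := by
      intro t ht
      rw [hsupp t (Finset.mem_range.mp ht) j]
      ring
    rw [Finset.sum_congr rfl this,
      Finset.sum_range_sub' (fun t => (-1 : ℚ) ^ t * (if j = W t then 1 else 0)) n]
    have hWn : W n = v := p.getVert_length
    have hW0 : W 0 = v := p.getVert_zero
    rw [hWn, hW0, hev.neg_one_pow]
    simp
  have : A.det = 0 := Matrix.exists_vecMul_eq_zero_iff.mp ⟨c, hcne, hmul⟩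
  rw [this] at hA
  exact hA.ne_zero rfl
end

section
/- Every vertex (extreme point) of the polytope P = { x ∈ [0,1]^E : Σ_{e∈δ(v)} x_e = 1 for all non-blossom vertices v, and Σ_{e∈δ(v)} x_e ≥ 1 for all blossom vertices v } of a finite graph G=(V,E) with V partitioned into blossom and non-blossom vertices is half-integral, i.e., all its coordinates lie in {0, 1/2, 1}. -/
open Finset


/-- Sum of a {0,1}-valued function over a finset is a natural number. -/
lemma aux_nat_sum {E : Type*} (s : Finset E) (x : E → ℝ)
    (h : ∀ e ∈ s, x e = 0 ∨ x e = 1) : ∃ k : ℕ, ∑ e ∈ s, x e = k := by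
  classical
  induction s using Finset.cons_induction with
  | empty => exact ⟨0, by simp⟩
  | cons a s ha ih =>
    obtain ⟨k, hk⟩ := ih (fun e he => h e (Finset.mem_cons_of_mem he))
    rcases h a (Finset.mem_cons_self a s) with h0 | h1
    · exact ⟨k, by rw [Finset.sum_cons, h0, hk]; ring⟩
    · exact ⟨k + 1, by rw [Finset.sum_cons, h1, hk]; push_cast; ring⟩

/-- Structure of a tight vertex: the number of incident fractional edges is not 1,
and if it is 2 then the two fractional values sum to 1. -/
lemma aux_tight {V E : Type*} [Fintype E] [DecidableEq V]
    (ε : E → V × V) (x : E → ℝ) (v : V)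
    (hb : ∀ e, 0 ≤ x e ∧ x e ≤ 1)
    (ht : ∑ e, (if (ε e).1 = v ∨ (ε e).2 = v then x e else 0) = 1)
    (D : Finset E)
    (hD : ∀ e, e ∈ D ↔ ((0 < x e ∧ x e < 1) ∧ ((ε e).1 = v ∨ (ε e).2 = v))) :
    D.card ≠ 1 ∧ (D.card = 2 → ∑ e ∈ D, x e = 1) := by
  classical
  set I : Finset E := Finset.univ.filter (fun e => (ε e).1 = v ∨ (ε e).2 = v) with hI
  have hsum : ∑ e ∈ I, x e = 1 := by
    rw [hI, Finset.sum_filter]; exact ht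
  have hDI : D ⊆ I := by
    intro e he
    rw [hD] at he
    simp [hI, he.2]
  have hsplit : ∑ e ∈ I \ D, x e + ∑ e ∈ D, x e = 1 := by
    rw [Finset.sum_sdiff hDI]; exact hsum
  obtain ⟨k, hk⟩ : ∃ k : ℕ, ∑ e ∈ I \ D, x e = k := by
    apply aux_nat_sum
    intro e he
    rw [Finset.mem_sdiff, hI, Finset.mem_filter] at he
    have hnD := he.2
    rw [hD] at hnD
    have : ¬ (0 < x e ∧ x e < 1) := fun h => hnD ⟨h, he.1.2⟩
    rcases (hb e) with ⟨h0, h1⟩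
    by_cases hx0 : x e = 0
    · exact Or.inl hx0
    · right
      by_contra hx1
      exact this ⟨lt_of_le_of_ne h0 (Ne.symm hx0), lt_of_le_of_ne h1 hx1⟩
  have hDsum : ∑ e ∈ D, x e = 1 - k := by linarith [hsplit, hk]
  have hpos : ∀ e ∈ D, 0 < x e := fun e he => ((hD e).1 he).1.1
  have hlt1 : ∀ e ∈ D, x e < 1 := fun e he => ((hD e).1 he).1.2
  constructor
  · intro hc1
    obtain ⟨e, he⟩ := Finset.card_eq_one.1 hc1
    rw [he, Finset.sum_singleton] at hDsum
    have h1 : 0 < x e := hpos e (by simp [he])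
    have h2 : x e < 1 := hlt1 e (by simp [he])
    have : (k:ℝ) < 1 := by linarith
    have hk0 : k = 0 := by exact_mod_cast Nat.lt_one_iff.1 (by exact_mod_cast this)
    rw [hk0] at hDsum
    simp at hDsum
    linarith
  · intro hc2
    have hne : D.Nonempty := Finset.card_pos.1 (by omega)
    have hposs : 0 < ∑ e ∈ D, x e := Finset.sum_pos hpos hne
    have : (k:ℝ) < 1 := by linarith
    have hk0 : k = 0 := by exact_mod_cast Nat.lt_one_iff.1 (by exact_mod_cast this)
    rw [hk0] at hDsum
    simpa using hDsum


lemma aux_margin (s : Finset ℝ) (h : ∀ a ∈ s, 0 < a) : ∃ c : ℝ, 0 < c ∧ ∀ a ∈ s, c ≤ a := by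
  classical
  induction s using Finset.cons_induction with
  | empty => exact ⟨1, by norm_num, by simp⟩
  | cons a s ha ih =>
    obtain ⟨c, hc, hcle⟩ := ih (fun b hb => h b (Finset.mem_cons_of_mem hb))
    refine ⟨min c a, lt_min hc (h a (Finset.mem_cons_self a s)), ?_⟩
    intro b hb
    rcases Finset.mem_cons.1 hb with rfl | hb
    · exact min_le_right _ _
    · exact le_trans (min_le_left _ _) (hcle b hb)

lemma aux_perturb {V E : Type*} [Fintype V] [Fintype E] [DecidableEq V]
    (ε : E → V × V) (blossom : V → Prop)
    (P : Set (E → ℝ))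
    (hP : P = {x | (∀ e, 0 ≤ x e ∧ x e ≤ 1) ∧
      (∀ v, ¬ blossom v → ∑ e, (if (ε e).1 = v ∨ (ε e).2 = v then x e else 0) = 1) ∧
      (∀ v, blossom v → 1 ≤ ∑ e, (if (ε e).1 = v ∨ (ε e).2 = v then x e else 0))})
    (x : E → ℝ) (hx : x ∈ P.extremePoints ℝ)
    (d : E → ℝ)
    (hd0 : ∀ e, ¬ (0 < x e ∧ x e < 1) → d e = 0)
    (hdt : ∀ v, (∑ e, (if (ε e).1 = v ∨ (ε e).2 = v then x e else 0) = 1) →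
      ∑ e, (if (ε e).1 = v ∨ (ε e).2 = v then d e else 0) = 0) :
    d = 0 := by
  classical
  obtain ⟨hxP, hext⟩ := mem_extremePoints.1 hx
  by_contra hdne
  obtain ⟨e₁, he₁⟩ : ∃ e, d e ≠ 0 := by
    by_contra h
    push_neg at h
    exact hdne (funext h)
  have hfrac₁ : 0 < x e₁ ∧ x e₁ < 1 := by
    by_contra h
    exact he₁ (hd0 e₁ h)
  rw [hP] at hxP
  obtain ⟨hb, hnb, hbl⟩ := hxP
  set S : V → ℝ := fun v => ∑ e, (if (ε e).1 = v ∨ (ε e).2 = v then x e else 0) with hS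
  set M : ℝ := ∑ e, |d e| with hM
  have hMpos : 0 < M := by
    have h1 : |d e₁| ≤ M := Finset.single_le_sum (f := fun e => |d e|)
      (fun e _ => abs_nonneg _) (Finset.mem_univ e₁)
    have h2 := abs_pos.2 he₁
    linarith
  have hdM : ∀ e, |d e| ≤ M := fun e => Finset.single_le_sum (f := fun e => |d e|)
      (fun e _ => abs_nonneg _) (Finset.mem_univ e)
  have hsumM : ∀ v, |∑ e, (if (ε e).1 = v ∨ (ε e).2 = v then d e else 0)| ≤ M := by
    intro v
    calc |∑ e, (if (ε e).1 = v ∨ (ε e).2 = v then d e else 0)|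
        ≤ ∑ e, |if (ε e).1 = v ∨ (ε e).2 = v then d e else 0| := Finset.abs_sum_le_sum_abs _ _
      _ ≤ ∑ e, |d e| := by
          apply Finset.sum_le_sum
          intro e _
          split
          · exact le_refl _
          · simp [abs_nonneg]
  -- the margin c
  obtain ⟨c, hcpos, hcle⟩ := aux_margin
    ((Finset.univ.image (fun e => if 0 < x e ∧ x e < 1 then min (x e) (1 - x e) else 1)) ∪
     (Finset.univ.image (fun v => if 1 < S v then S v - 1 else 1)))
    (by
      intro a ha
      rcases Finset.mem_union.1 ha with h | h
      · obtain ⟨e, _, he⟩ := Finset.mem_image.1 h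
        rw [← he]
        split
        · rename_i hf
          exact lt_min hf.1 (by linarith [hf.2])
        · norm_num
      · obtain ⟨v, _, hv⟩ := Finset.mem_image.1 h
        rw [← hv]
        split
        · rename_i hf; linarith
        · norm_num)
  have hcedge : ∀ e, 0 < x e → x e < 1 → c ≤ min (x e) (1 - x e) := by
    intro e h0 h1
    have hle := hcle _ (Finset.mem_union_left _
      (Finset.mem_image_of_mem (fun e => if 0 < x e ∧ x e < 1 then min (x e) (1 - x e) else 1)
        (Finset.mem_univ e)))
    have hle' : c ≤ if 0 < x e ∧ x e < 1 then min (x e) (1 - x e) else 1 := hle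
    rwa [if_pos ⟨h0, h1⟩] at hle'
  have hcvert : ∀ v, 1 < S v → c ≤ S v - 1 := by
    intro v h1
    have hle := hcle _ (Finset.mem_union_right _
      (Finset.mem_image_of_mem (fun v => if 1 < S v then S v - 1 else 1) (Finset.mem_univ v)))
    have hle' : c ≤ if 1 < S v then S v - 1 else 1 := hle
    rwa [if_pos h1] at hle'
  set t : ℝ := c / M with ht
  have htpos : 0 < t := div_pos hcpos hMpos
  have htd : ∀ e, |t * d e| ≤ c := by
    intro e
    rw [abs_mul, abs_of_pos htpos, ht]
    rw [div_mul_eq_mul_div, div_le_iff₀ hMpos]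
    have := hdM e
    nlinarith [abs_nonneg (d e)]
  have hSsplit : ∀ (w : E → ℝ) (s : ℝ) (v : V),
      ∑ e, (if (ε e).1 = v ∨ (ε e).2 = v then x e + s * w e else 0)
      = S v + s * ∑ e, (if (ε e).1 = v ∨ (ε e).2 = v then w e else 0) := by
    intro w s v
    rw [hS]
    simp only
    rw [Finset.mul_sum, ← Finset.sum_add_distrib]
    apply Finset.sum_congr rfl
    intro e _
    split <;> simp
  have hmem : ∀ (s : ℝ), |s| ≤ t → (fun e => x e + s * d e) ∈ P := by
    intro s hs
    rw [hP]
    refine ⟨?_, ?_, ?_⟩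
    · intro e
      show 0 ≤ x e + s * d e ∧ x e + s * d e ≤ 1
      by_cases hf : 0 < x e ∧ x e < 1
      · have h1 : |s * d e| ≤ c := by
          rw [abs_mul]
          calc |s| * |d e| ≤ t * |d e| := by
                apply mul_le_mul_of_nonneg_right hs (abs_nonneg _)
            _ = |t * d e| := by rw [abs_mul, abs_of_pos htpos]
            _ ≤ c := htd e
        have h2 := hcedge e hf.1 hf.2
        have h3 : min (x e) (1 - x e) ≤ x e := min_le_left _ _
        have h4 : min (x e) (1 - x e) ≤ 1 - x e := min_le_right _ _
        have h5 : -c ≤ s * d e := neg_le_of_abs_le h1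
        have h6 : s * d e ≤ c := le_of_abs_le h1
        constructor <;> nlinarith
      · rw [hd0 e hf]
        simpa using hb e
    · intro v hv
      show ∑ e, (if (ε e).1 = v ∨ (ε e).2 = v then x e + s * d e else 0) = 1
      rw [hSsplit d s v, hdt v (hnb v hv)]
      have : S v = 1 := hnb v hv
      rw [this]; ring
    · intro v hv
      show 1 ≤ ∑ e, (if (ε e).1 = v ∨ (ε e).2 = v then x e + s * d e else 0)
      rw [hSsplit d s v]
      have h1 : 1 ≤ S v := hbl v hv
      by_cases hvt : S v = 1
      · rw [hdt v hvt, hvt]; norm_num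
      · have hlt : 1 < S v := lt_of_le_of_ne h1 (Ne.symm hvt)
        have h2 := hcvert v hlt
        have h3 := hsumM v
        have h7 : |s * ∑ e, (if (ε e).1 = v ∨ (ε e).2 = v then d e else 0)| ≤ c := by
          rw [abs_mul]
          calc |s| * _ ≤ t * M := by
                apply mul_le_mul hs h3 (abs_nonneg _) (le_of_lt htpos)
            _ = c := by rw [ht]; field_simp
        have := neg_le_of_abs_le h7
        linarith
  have hyP : (fun e => x e + t * d e) ∈ P := hmem t (by rw [abs_of_pos htpos])
  have hzP : (fun e => x e + (-t) * d e) ∈ P := hmem (-t) (by rw [abs_neg, abs_of_pos htpos])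
  have hseg : x ∈ openSegment ℝ (fun e => x e + t * d e) (fun e => x e + (-t) * d e) := by
    refine ⟨1/2, 1/2, by norm_num, by norm_num, by norm_num, ?_⟩
    funext e
    simp only [Pi.add_apply, Pi.smul_apply, smul_eq_mul]
    ring
  have heq := (hext _ hyP _ hzP hseg).1
  have heq1 : x e₁ + t * d e₁ = x e₁ := congrFun heq e₁
  have : t * d e₁ = 0 := by linarith
  rcases mul_eq_zero.1 this with h | h
  · linarith
  · exact he₁ h


theorem stmt_5 {V E : Type*} [Fintype V] [Fintype E] [DecidableEq V]
    (ε : E → V × V) (hε : ∀ e, (ε e).1 ≠ (ε e).2)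
    (blossom : V → Prop)
    (P : Set (E → ℝ))
    (hP : P = {x | (∀ e, 0 ≤ x e ∧ x e ≤ 1) ∧
      (∀ v, ¬ blossom v → ∑ e, (if (ε e).1 = v ∨ (ε e).2 = v then x e else 0) = 1) ∧
      (∀ v, blossom v → 1 ≤ ∑ e, (if (ε e).1 = v ∨ (ε e).2 = v then x e else 0))}) :
    ∀ x ∈ P.extremePoints ℝ, ∀ e, x e ∈ ({0, 1/2, 1} : Set ℝ) := by
  classical
  intro x hx e₀
  by_contra he₀
  simp only [Set.mem_insert_iff, Set.mem_singleton_iff] at he₀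
  push_neg at he₀
  obtain ⟨h00, h0h, h01⟩ := he₀
  have hxP := (mem_extremePoints.1 hx).1
  rw [hP] at hxP
  obtain ⟨hb, hnb, hbl⟩ := hxP
  set F : Finset E := Finset.univ.filter (fun e => 0 < x e ∧ x e < 1) with hF
  have hmemF : ∀ e, e ∈ F ↔ (0 < x e ∧ x e < 1) := by
    intro e; rw [hF, Finset.mem_filter]; simp
  have he₀F : e₀ ∈ F := by
    rw [hmemF]
    rcases hb e₀ with ⟨hl, hr⟩
    exact ⟨lt_of_le_of_ne hl (Ne.symm h00), lt_of_le_of_ne hr h01⟩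
  set tight : V → Prop := fun v => ∑ e, (if (ε e).1 = v ∨ (ε e).2 = v then x e else 0) = 1
    with htight
  set deg : V → ℕ := fun v => (F.filter (fun e => (ε e).1 = v ∨ (ε e).2 = v)).card with hdeg
  set T' : Finset V := Finset.univ.filter (fun v => tight v ∧ 1 ≤ deg v) with hT'
  have hmemT' : ∀ v, v ∈ T' ↔ (tight v ∧ 1 ≤ deg v) := by
    intro v; rw [hT', Finset.mem_filter]; simp
  -- specialization of the perturbation lemma
  have key : ∀ d : E → ℝ, (∀ e, e ∉ F → d e = 0) →
      (∀ v, tight v → ∑ e, (if (ε e).1 = v ∨ (ε e).2 = v then d e else 0) = 0) → d = 0 := by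
    intro d h1 h2
    apply aux_perturb ε blossom P hP x hx d
    · intro e he
      apply h1
      rw [hmemF]
      exact he
    · exact h2
  -- facts about tight vertices
  have fact1 : ∀ v, tight v → deg v ≠ 1 := by
    intro v hv
    exact (aux_tight ε x v hb hv (F.filter (fun e => (ε e).1 = v ∨ (ε e).2 = v))
      (by intro e; rw [Finset.mem_filter, hmemF])).1
  have fact2 : ∀ v, tight v → deg v = 2 →
      ∑ e ∈ F.filter (fun e => (ε e).1 = v ∨ (ε e).2 = v), x e = 1 := by
    intro v hv
    exact (aux_tight ε x v hb hv (F.filter (fun e => (ε e).1 = v ∨ (ε e).2 = v))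
      (by intro e; rw [Finset.mem_filter, hmemF])).2
  -- dimension count : F.card ≤ T'.card
  have hcard : F.card ≤ T'.card := by
    have hsum_eq : ∀ (D : E → ℝ), (∀ e, e ∉ F → D e = 0) → ∀ v : V,
        ∑ e, (if (ε e).1 = v ∨ (ε e).2 = v then D e else 0)
          = ∑ e ∈ F.attach, (if (ε e.1).1 = v ∨ (ε e.1).2 = v then D e.1 else 0) := by
      intro D hD v
      rw [Finset.sum_attach F (fun e => if (ε e).1 = v ∨ (ε e).2 = v then D e else 0)]
      symm
      apply Finset.sum_subset (Finset.subset_univ F)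
      intro e _ he
      rw [hD e he]
      simp
    let f : (↥F → ℝ) →ₗ[ℝ] (↥T' → ℝ) :=
      { toFun := fun d v => ∑ e : ↥F, (if (ε e.1).1 = v.1 ∨ (ε e.1).2 = v.1 then d e else 0)
        map_add' := by
          intro a b
          funext v
          simp only [Pi.add_apply]
          rw [← Finset.sum_add_distrib]
          apply Finset.sum_congr rfl
          intro e _
          split <;> simp
        map_smul' := by
          intro m a
          funext v
          simp only [Pi.smul_apply, RingHom.id_apply, smul_eq_mul]
          rw [Finset.mul_sum]
          apply Finset.sum_congr rfl
          intro e _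
          split <;> simp }
    have hker : ∀ d : ↥F → ℝ, f d = 0 → d = 0 := by
      intro d hd
      set D : E → ℝ := fun e => if h : e ∈ F then d ⟨e, h⟩ else 0 with hDdef
      have hD0 : ∀ e, e ∉ F → D e = 0 := by
        intro e he; rw [hDdef]; exact dif_neg he
      have hDzero : D = 0 := by
        apply key D hD0
        intro v hv
        rw [hsum_eq D hD0 v]
        by_cases hdv : 1 ≤ deg v
        · have hvT' : v ∈ T' := (hmemT' v).2 ⟨hv, hdv⟩
          have hfd : ∑ e : ↥F, (if (ε e.1).1 = v ∨ (ε e.1).2 = v then d e else 0) = 0 := by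
            have := congrFun hd ⟨v, hvT'⟩
            simpa [f] using this
          calc ∑ e ∈ F.attach, (if (ε e.1).1 = v ∨ (ε e.1).2 = v then D e.1 else 0)
              = ∑ e : ↥F, (if (ε e.1).1 = v ∨ (ε e.1).2 = v then d e else 0) := by
                rw [Finset.univ_eq_attach]
                apply Finset.sum_congr rfl
                intro e _
                have hDe : D e.1 = d e := by rw [hDdef]; simp [dif_pos e.2]
                rw [hDe]
            _ = 0 := hfd
        · have hdv0 : deg v = 0 := by omega
          have hfe : F.filter (fun e => (ε e).1 = v ∨ (ε e).2 = v) = ∅ :=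
            Finset.card_eq_zero.1 hdv0
          apply Finset.sum_eq_zero
          intro e _
          split
          · rename_i hinc
            exfalso
            have : e.1 ∈ F.filter (fun e => (ε e).1 = v ∨ (ε e).2 = v) :=
              Finset.mem_filter.2 ⟨e.2, hinc⟩
            rw [hfe] at this
            exact absurd this (Finset.notMem_empty _)
          · rfl
      funext e
      have := congrFun hDzero e.1
      rw [hDdef] at this
      simp only [dif_pos e.2, Pi.zero_apply] at this
      simpa using this
    have hinj : Function.Injective f := by
      intro a b hab
      have h0 : f (a - b) = 0 := by rw [map_sub, hab, sub_self]
      have := hker (a - b) h0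
      rwa [sub_eq_zero] at this
    have hfin := LinearMap.finrank_le_finrank_of_injective hinj
    rw [Module.finrank_fintype_fun_eq_card, Module.finrank_fintype_fun_eq_card] at hfin
    simpa [Fintype.card_coe] using hfin
  -- double counting
  have hdeg2 : ∀ v ∈ T', 2 ≤ deg v := by
    intro v hv
    obtain ⟨ht, hd⟩ := (hmemT' v).1 hv
    have := fact1 v ht
    omega
  have hcount : ∑ v ∈ T', deg v = ∑ e ∈ F, (T'.filter (fun v => (ε e).1 = v ∨ (ε e).2 = v)).card := by
    have : ∀ v, deg v = ∑ e ∈ F, (if (ε e).1 = v ∨ (ε e).2 = v then 1 else 0) := by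
      intro v; exact Finset.card_filter _ _
    calc ∑ v ∈ T', deg v
        = ∑ v ∈ T', ∑ e ∈ F, (if (ε e).1 = v ∨ (ε e).2 = v then 1 else 0) := by
          apply Finset.sum_congr rfl; intro v _; exact this v
      _ = ∑ e ∈ F, ∑ v ∈ T', (if (ε e).1 = v ∨ (ε e).2 = v then 1 else 0) := Finset.sum_comm
      _ = ∑ e ∈ F, (T'.filter (fun v => (ε e).1 = v ∨ (ε e).2 = v)).card := by
          apply Finset.sum_congr rfl; intro e _; rw [Finset.card_filter]
  have hle2 : ∀ e ∈ F, (T'.filter (fun v => (ε e).1 = v ∨ (ε e).2 = v)).card ≤ 2 := by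
    intro e _
    have hsub : T'.filter (fun v => (ε e).1 = v ∨ (ε e).2 = v) ⊆ {(ε e).1, (ε e).2} := by
      intro v hv
      rcases (Finset.mem_filter.1 hv).2 with h | h
      · simp [← h]
      · simp [← h]
    calc (T'.filter (fun v => (ε e).1 = v ∨ (ε e).2 = v)).card
        ≤ ({(ε e).1, (ε e).2} : Finset V).card := Finset.card_le_card hsub
      _ ≤ 2 := (Finset.card_insert_le _ _).trans (by simp)
  have h2T : 2 * T'.card ≤ ∑ v ∈ T', deg v := by
    calc 2 * T'.card = ∑ _v ∈ T', 2 := by rw [Finset.sum_const, smul_eq_mul, mul_comm]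
      _ ≤ ∑ v ∈ T', deg v := Finset.sum_le_sum hdeg2
  have h2F : ∑ v ∈ T', deg v ≤ 2 * F.card := by
    rw [hcount]
    calc ∑ e ∈ F, (T'.filter (fun v => (ε e).1 = v ∨ (ε e).2 = v)).card
        ≤ ∑ _e ∈ F, 2 := Finset.sum_le_sum hle2
      _ = 2 * F.card := by rw [Finset.sum_const, smul_eq_mul, mul_comm]
  have hsum2 : ∑ v ∈ T', deg v = ∑ _v ∈ T', 2 := by
    have : ∑ _v ∈ T', 2 = 2 * T'.card := by rw [Finset.sum_const, smul_eq_mul, mul_comm]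
    omega
  have hdegeq : ∀ v ∈ T', deg v = 2 := by
    have := (Finset.sum_eq_sum_iff_of_le hdeg2).1 hsum2.symm
    intro v hv
    exact (this v hv).symm
  -- the final perturbation
  set d : E → ℝ := fun e => if e ∈ F then x e - 1/2 else 0 with hd
  have hdzero : d = 0 := by
    apply key
    · intro e he; rw [hd]; simp [if_neg he]
    · intro v hv
      have step1 : ∑ e, (if (ε e).1 = v ∨ (ε e).2 = v then d e else 0)
          = ∑ e ∈ F.filter (fun e => (ε e).1 = v ∨ (ε e).2 = v), (x e - 1/2) := by
        calc ∑ e, (if (ε e).1 = v ∨ (ε e).2 = v then d e else 0)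
            = ∑ e ∈ F, (if (ε e).1 = v ∨ (ε e).2 = v then d e else 0) := by
              symm
              apply Finset.sum_subset (Finset.subset_univ F)
              intro e _ he
              rw [hd]
              simp [if_neg he]
          _ = ∑ e ∈ F, (if (ε e).1 = v ∨ (ε e).2 = v then x e - 1/2 else 0) := by
              apply Finset.sum_congr rfl
              intro e he
              rw [hd]
              simp [he]
          _ = ∑ e ∈ F.filter (fun e => (ε e).1 = v ∨ (ε e).2 = v), (x e - 1/2) :=
              (Finset.sum_filter _ _).symm
      rw [step1]
      by_cases hdv : 1 ≤ deg v
      · have hvT' : v ∈ T' := (hmemT' v).2 ⟨hv, hdv⟩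
        have hd2 : deg v = 2 := hdegeq v hvT'
        have hsx := fact2 v hv hd2
        rw [Finset.sum_sub_distrib, hsx, Finset.sum_const]
        have hc2 : (F.filter (fun e => (ε e).1 = v ∨ (ε e).2 = v)).card = 2 := hd2
        rw [hc2]
        norm_num
      · have hdv0 : deg v = 0 := by omega
        have hfe : F.filter (fun e => (ε e).1 = v ∨ (ε e).2 = v) = ∅ :=
          Finset.card_eq_zero.1 hdv0
        rw [hfe]
        simp
  have := congrFun hdzero e₀
  rw [hd] at this
  simp only [if_pos he₀F, Pi.zero_apply] at this
  apply h0h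
  linarith
end

section
/- For a bipartite graph G, every vertex of the polytope { x ∈ [0,1]^E : Σ_{e∈δ(v)} x_e = 1 for all v ∈ V } is integral; equivalently, the bipartite relaxation of the perfect matching IP is tight for bipartite graphs. -/
open Finset

theorem aux_kernel {κ ι : Type*} [Fintype κ] [Fintype ι] [Nonempty ι]
    (A : κ → ι → ℝ) (σ : ι → ℝ) (hσ : ∀ i, σ i ≠ 0)
    (hdep : ∀ k, ∑ i, σ i * A k i = 0)
    (hcard : Fintype.card ι ≤ Fintype.card κ) :
    ∃ d : κ → ℝ, d ≠ 0 ∧ ∀ i, ∑ k, A k i * d k = 0 := by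
  classical
  set L : (κ → ℝ) →ₗ[ℝ] (ι → ℝ) :=
    { toFun := fun d i => ∑ k, A k i * d k
      map_add' := by
        intro d e; funext i; simp [mul_add, Finset.sum_add_distrib]
      map_smul' := by
        intro c d; funext i
        simp only [Pi.smul_apply, smul_eq_mul, RingHom.id_apply, Finset.mul_sum]
        exact Finset.sum_congr rfl (fun k _ => by ring) } with hLdef
  set φ : (ι → ℝ) →ₗ[ℝ] ℝ :=
    { toFun := fun w => ∑ i, σ i * w i
      map_add' := by
        intro w z; simp [mul_add, Finset.sum_add_distrib]
      map_smul' := by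
        intro c w
        simp only [Pi.smul_apply, smul_eq_mul, RingHom.id_apply, Finset.mul_sum]
        exact Finset.sum_congr rfl (fun i _ => by ring) } with hφdef
  have hrange : ∀ d, L d ∈ LinearMap.ker φ := by
    intro d
    simp only [LinearMap.mem_ker, hφdef, hLdef, LinearMap.coe_mk, AddHom.coe_mk]
    rw [show ∑ i, σ i * ∑ k, A k i * d k = ∑ k, (∑ i, σ i * A k i) * d k by
      simp only [Finset.mul_sum, Finset.sum_mul]
      rw [Finset.sum_comm]
      exact Finset.sum_congr rfl fun i _ => Finset.sum_congr rfl fun k _ => by ring]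
    simp [hdep]
  have hφsurj : Function.Surjective φ := by
    intro c
    obtain ⟨i0⟩ := ‹Nonempty ι›
    refine ⟨fun i => if i = i0 then c / σ i0 else 0, ?_⟩
    simp only [hφdef, LinearMap.coe_mk, AddHom.coe_mk]
    rw [Finset.sum_eq_single i0]
    · rw [if_pos rfl]; field_simp; exact mul_div_cancel_left₀ c (hσ i0)
    · intro b _ hb; simp [hb]
    · intro h; exact absurd (mem_univ i0) h
  have hker_rank : Module.finrank ℝ (LinearMap.ker φ) + 1 = Fintype.card ι := by
    have h1 := LinearMap.finrank_range_add_finrank_ker φ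
    rw [LinearMap.range_eq_top.mpr hφsurj] at h1
    rw [finrank_top, Module.finrank_self, Module.finrank_pi] at h1
    omega
  have hnotinj : ¬ Function.Injective (L.codRestrict (LinearMap.ker φ) hrange) := by
    intro hinj
    have := LinearMap.finrank_le_finrank_of_injective hinj
    rw [Module.finrank_pi] at this
    omega
  rw [Function.not_injective_iff] at hnotinj
  obtain ⟨a, b, hab, hne⟩ := hnotinj
  refine ⟨a - b, sub_ne_zero.mpr hne, ?_⟩
  have hLab : L a = L b := by
    have := congrArg Subtype.val hab
    simpa using this
  have hLd : L (a - b) = 0 := by rw [map_sub, hLab, sub_self]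
  intro i
  have := congrFun hLd i
  simpa [hLdef] using this

theorem stmt_9 {V E : Type*} [Fintype V] [Fintype E] [DecidableEq V]
    (ε : E → V × V) (hε : ∀ e, (ε e).1 ≠ (ε e).2)
    (hbip : ∃ color : V → Bool, ∀ e, color (ε e).1 ≠ color (ε e).2)
    (P : Set (E → ℝ))
    (hP : P = {x | (∀ e, 0 ≤ x e ∧ x e ≤ 1) ∧
      ∀ v, ∑ e, (if (ε e).1 = v ∨ (ε e).2 = v then x e else 0) = 1}) :
    ∀ x ∈ P.extremePoints ℝ, ∀ e, x e ∈ ({0, 1} : Set ℝ) := by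
  classical
  obtain ⟨color, hcolor⟩ := hbip
  subst hP
  rintro x hx e0
  obtain ⟨⟨hx01, hxdeg⟩, hext⟩ := hx
  by_contra h01
  simp only [Set.mem_insert_iff, Set.mem_singleton_iff, not_or] at h01
  obtain ⟨h0, h1⟩ := h01
  set Ft : Finset E := Finset.univ.filter (fun e => x e ≠ 0 ∧ x e ≠ 1) with hFt
  set Vt : Finset V := Finset.univ.filter
    (fun v => ∃ e ∈ Ft, (ε e).1 = v ∨ (ε e).2 = v) with hVt
  have he0 : e0 ∈ Ft := by simp [hFt, h0, h1]
  have hend : ∀ e ∈ Ft, (ε e).1 ∈ Vt ∧ (ε e).2 ∈ Vt := by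
    intro e he
    constructor <;> · simp only [hVt, mem_filter, mem_univ, true_and]
                      exact ⟨e, he, by tauto⟩
  have hfrac : ∀ e ∈ Ft, 0 < x e ∧ x e < 1 := by
    intro e he
    simp only [hFt, mem_filter, mem_univ, true_and] at he
    exact ⟨lt_of_le_of_ne (hx01 e).1 (Ne.symm he.1),
           lt_of_le_of_ne (hx01 e).2 he.2⟩
  have hdeg2 : ∀ v ∈ Vt, 2 ≤ (Ft.filter (fun e => (ε e).1 = v ∨ (ε e).2 = v)).card := by
    intro v hv
    simp only [hVt, mem_filter, mem_univ, true_and] at hv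
    obtain ⟨f, hf, hfinc⟩ := hv
    rw [show (2 : ℕ) = 1 + 1 from rfl]
    rw [Nat.add_one_le_iff, Finset.one_lt_card]
    by_contra hc
    push_neg at hc
    have honly : ∀ e, e ∈ Ft → ((ε e).1 = v ∨ (ε e).2 = v) → e = f := by
      intro e he hinc
      by_contra hne
      exact hne (hc e (mem_filter.mpr ⟨he, hinc⟩) f (mem_filter.mpr ⟨hf, hfinc⟩))
    have hsum := hxdeg v
    rw [← Finset.sum_erase_add _ _ (mem_univ f)] at hsum
    rw [if_pos hfinc] at hsum
    have hterm : ∀ e ∈ Finset.univ.erase f,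
        (if (ε e).1 = v ∨ (ε e).2 = v then x e else 0)
          = (if ((ε e).1 = v ∨ (ε e).2 = v) ∧ x e = 1 then (1:ℝ) else 0) := by
      intro e he
      rw [Finset.mem_erase] at he
      by_cases hinc : (ε e).1 = v ∨ (ε e).2 = v
      · have heF : e ∉ Ft := fun heF => he.1 (honly e heF hinc)
        simp only [hFt, mem_filter, mem_univ, true_and, not_and_or, not_not] at heF
        rcases heF with h | h
        · simp [hinc, h]
        · simp [hinc, h]
      · simp [hinc]
    rw [Finset.sum_congr rfl hterm, Finset.sum_boole] at hsum
    set n := ((Finset.univ.erase f).filter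
      (fun e => ((ε e).1 = v ∨ (ε e).2 = v) ∧ x e = 1)).card with hn
    have hxf := hfrac f hf
    rcases Nat.eq_zero_or_pos n with h | h
    · rw [h] at hsum; simp at hsum; linarith [hxf.2]
    · have : (1:ℝ) ≤ (n:ℝ) := by exact_mod_cast h
      linarith [hxf.1]
  have hpair : ∀ e ∈ Ft, (Vt.filter (fun v => (ε e).1 = v ∨ (ε e).2 = v))
      = {(ε e).1, (ε e).2} := by
    intro e he
    ext v
    simp only [mem_filter, mem_insert, mem_singleton]
    constructor
    · rintro ⟨_, h | h⟩
      · exact Or.inl h.symm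
      · exact Or.inr h.symm
    · rintro (h | h)
      · exact ⟨h ▸ (hend e he).1, Or.inl h.symm⟩
      · exact ⟨h ▸ (hend e he).2, Or.inr h.symm⟩
  have hcard : Vt.card ≤ Ft.card := by
    have h1 : 2 * Vt.card ≤ ∑ v ∈ Vt,
        (Ft.filter (fun e => (ε e).1 = v ∨ (ε e).2 = v)).card := by
      calc 2 * Vt.card = Vt.card * 2 := by ring
        _ = ∑ _v ∈ Vt, 2 := by rw [Finset.sum_const, smul_eq_mul]
        _ ≤ _ := Finset.sum_le_sum hdeg2
    have h2 : ∑ v ∈ Vt, (Ft.filter (fun e => (ε e).1 = v ∨ (ε e).2 = v)).card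
        = 2 * Ft.card := by
      calc ∑ v ∈ Vt, (Ft.filter (fun e => (ε e).1 = v ∨ (ε e).2 = v)).card
          = ∑ v ∈ Vt, ∑ e ∈ Ft, (if (ε e).1 = v ∨ (ε e).2 = v then 1 else 0) := by
            exact Finset.sum_congr rfl fun v _ => Finset.card_filter _ _
        _ = ∑ e ∈ Ft, ∑ v ∈ Vt, (if (ε e).1 = v ∨ (ε e).2 = v then 1 else 0) :=
            Finset.sum_comm
        _ = ∑ e ∈ Ft, 2 := by
            refine Finset.sum_congr rfl fun e he => ?_
            rw [← Finset.card_filter, hpair e he, Finset.card_pair (hε e)]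
        _ = 2 * Ft.card := by rw [Finset.sum_const, smul_eq_mul]; ring
    omega
  have hVtne : Nonempty ↥Vt := ⟨⟨(ε e0).1, (hend e0 he0).1⟩⟩
  have hcard' : Fintype.card ↥Vt ≤ Fintype.card ↥Ft := by
    simpa [Fintype.card_coe] using hcard
  obtain ⟨d, hd0, hdker⟩ := aux_kernel
    (κ := ↥Ft) (ι := ↥Vt)
    (fun k i => if (ε (k:E)).1 = (i:V) ∨ (ε (k:E)).2 = (i:V) then 1 else 0)
    (fun i => if color (i:V) then 1 else -1)
    (by intro i; split <;> norm_num)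
    (by
      intro k
      rw [Finset.sum_coe_sort Vt (fun v => (if color v then (1:ℝ) else -1) *
        (if (ε (k:E)).1 = v ∨ (ε (k:E)).2 = v then 1 else 0))]
      rw [← Finset.sum_subset (show {(ε (k:E)).1, (ε (k:E)).2} ⊆ Vt by
            intro v hv
            rcases Finset.mem_insert.mp hv with h | h
            · exact h ▸ (hend k k.2).1
            · exact (Finset.mem_singleton.mp h) ▸ (hend k k.2).2)
          (by
            intro v hv hnv
            have : ¬((ε (k:E)).1 = v ∨ (ε (k:E)).2 = v) := by
              intro h
              exact hnv (by rcases h with h | h <;> simp [← h])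
            simp [this])]
      rw [Finset.sum_pair (hε (k:E))]
      have := hcolor (k:E)
      rcases Bool.eq_false_or_eq_true (color (ε (k:E)).1) with h1 | h1 <;>
        rcases Bool.eq_false_or_eq_true (color (ε (k:E)).2) with h2 | h2 <;>
        simp [h1, h2] at this ⊢)
    hcard'
  set d' : E → ℝ := fun e => if h : e ∈ Ft then d ⟨e, h⟩ else 0 with hd'
  have hd'Ft : ∀ (k : ↥Ft), d' (k:E) = d k := by
    intro k; simp [hd', k.2]
  have hd'0 : ∀ e ∉ Ft, d' e = 0 := by intro e he; simp [hd', he]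
  have hd'ker : ∀ v : V, ∑ e, (if (ε e).1 = v ∨ (ε e).2 = v then d' e else 0) = 0 := by
    intro v
    by_cases hv : v ∈ Vt
    · rw [← Finset.sum_subset (Finset.subset_univ Ft)
        (by intro e _ he; rw [hd'0 e he]; split <;> simp),
        ← Finset.sum_coe_sort Ft (fun e => if (ε e).1 = v ∨ (ε e).2 = v then d' e else 0)]
      have h := hdker ⟨v, hv⟩
      simpa [hd'Ft, ite_mul] using h
    · refine Finset.sum_eq_zero fun e _ => ?_
      split
      · rename_i hinc
        have heF : e ∉ Ft := by
          intro heF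
          exact hv (by simp only [hVt, mem_filter, mem_univ, true_and];
                       exact ⟨e, heF, by tauto⟩)
        exact hd'0 e heF
      · rfl
  have hFtne : Ft.Nonempty := ⟨e0, he0⟩
  set m : ℝ := Ft.inf' hFtne (fun e => min (x e) (1 - x e) / (|d' e| + 1)) with hm
  have hmpos : 0 < m := by
    rw [hm, Finset.lt_inf'_iff]
    intro e he
    have h := hfrac e he
    have hmin : 0 < min (x e) (1 - x e) := lt_min h.1 (by linarith [h.2])
    exact div_pos hmin (by positivity)
  have hbound : ∀ e ∈ Ft, |m * d' e| ≤ min (x e) (1 - x e) := by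
    intro e he
    have hle := Finset.inf'_le (fun e => min (x e) (1 - x e) / (|d' e| + 1)) he
    have hpos : (0:ℝ) < |d' e| + 1 := by positivity
    rw [le_div_iff₀ hpos] at hle
    rw [abs_mul, abs_of_pos hmpos]
    nlinarith [abs_nonneg (d' e)]
  have hmem : ∀ s : ℝ, s = 1 ∨ s = -1 →
      (∀ e, 0 ≤ x e + s * (m * d' e) ∧ x e + s * (m * d' e) ≤ 1) ∧
      ∀ v, ∑ e, (if (ε e).1 = v ∨ (ε e).2 = v then x e + s * (m * d' e) else 0) = 1 := by
    intro s hs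
    have habs : |s| = 1 := by rcases hs with h | h <;> simp [h]
    constructor
    · intro e
      by_cases he : e ∈ Ft
      · have hb : |s * (m * d' e)| ≤ min (x e) (1 - x e) := by
          rw [abs_mul, habs, one_mul]; exact hbound e he
        have h1 := neg_abs_le (s * (m * d' e))
        have h2 := le_abs_self (s * (m * d' e))
        have h3 := min_le_left (x e) (1 - x e)
        have h4 := min_le_right (x e) (1 - x e)
        constructor <;> linarith
      · rw [hd'0 e he]
        simpa using hx01 e
    · intro v
      have hsplit : ∑ e, (if (ε e).1 = v ∨ (ε e).2 = v then x e + s * (m * d' e) else 0)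
          = (∑ e, if (ε e).1 = v ∨ (ε e).2 = v then x e else 0)
            + s * m * ∑ e, (if (ε e).1 = v ∨ (ε e).2 = v then d' e else 0) := by
        rw [Finset.mul_sum, ← Finset.sum_add_distrib]
        exact Finset.sum_congr rfl fun e _ => by split <;> ring
      rw [hsplit, hxdeg v, hd'ker v]; ring
  have hy1 := hmem 1 (Or.inl rfl)
  have hy2 := hmem (-1) (Or.inr rfl)
  have hseg : x ∈ openSegment ℝ (fun e => x e + 1 * (m * d' e))
      (fun e => x e + (-1) * (m * d' e)) := by
    refine ⟨1/2, 1/2, by norm_num, by norm_num, by norm_num, ?_⟩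
    funext e
    simp only [Pi.add_apply, Pi.smul_apply, smul_eq_mul]
    ring
  have hres := hext (x₁ := fun e => x e + 1 * (m * d' e)) hy1
    (x₂ := fun e => x e + (-1) * (m * d' e)) hy2 hseg
  have heq := hres
  have hd'z : ∀ e, d' e = 0 := by
    intro e
    have h := congrFun heq e
    have h2 : m * d' e = 0 := by
      linarith
    exact (mul_eq_zero.mp h2).resolve_left (ne_of_gt hmpos)
  exact hd0 (funext fun k => ((hd'Ft k).symm.trans (hd'z k)))
end

section
/- Let G=(V,E) be a finite graph, S ⊆ V a set of vertices of odd size such that the induced odd cycle structure allows near-perfect matchings (namely, for every u ∈ S there is a matching of G[S] covering S∖{u}). Let G† be the graph obtained by contracting S to a single vertex v(S). If M† is a perfect matching of G†, then M† (lifted back to G) can be extended by a matching within S to a perfect matching of G. -/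
theorem stmt_12 {V : Type*} [DecidableEq V] (G : SimpleGraph V) (S : Finset V)
    (hodd : Odd S.card)
    (hfc : ∀ u ∈ S, ∃ MS : Finset (Sym2 V),
      (∀ e ∈ MS, e ∈ G.edgeSet ∧ ∀ x ∈ e, x ∈ S ∧ x ≠ u) ∧
      (∀ x ∈ S, x ≠ u → ∃! e, e ∈ MS ∧ x ∈ e))
    (M : Finset (Sym2 V))
    (hMG : ∀ e ∈ M, e ∈ G.edgeSet)
    (hMout : ∀ e ∈ M, ∃ x ∈ e, x ∉ S)
    (hMcov : ∀ v : V, v ∉ S → ∃! e, e ∈ M ∧ v ∈ e)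
    (hMS : ∃! e, e ∈ M ∧ ∃ x ∈ e, x ∈ S) :
    ∃ MS : Finset (Sym2 V),
      (∀ e ∈ MS, e ∈ G.edgeSet ∧ ∀ x ∈ e, x ∈ S) ∧
      ∀ v : V, ∃! e, e ∈ M ∪ MS ∧ v ∈ e := by
  obtain ⟨e₀, ⟨he₀M, u, hue₀, huS⟩, huniq⟩ := hMS
  obtain ⟨MS, hMS1, hMS2⟩ := hfc u huS
  -- the only S-vertex of e₀ is u
  obtain ⟨w, hwe, hwS⟩ := hMout e₀ he₀M
  have hwu : w ≠ u := fun h => hwS (h ▸ huS)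
  have he₀ : e₀ = s(w, u) := ((Sym2.mem_and_mem_iff hwu).mp ⟨hwe, hue₀⟩)
  have key : ∀ x ∈ e₀, x ∈ S → x = u := by
    intro y hye hyS
    rw [he₀, Sym2.mem_iff] at hye
    rcases hye with rfl | rfl
    · exact absurd hyS hwS
    · rfl
  refine ⟨MS, fun e he => ⟨(hMS1 e he).1, fun x hx => ((hMS1 e he).2 x hx).1⟩, ?_⟩
  intro v
  by_cases hvS : v ∈ S
  · by_cases hvu : v = u
    · subst hvu
      refine ⟨e₀, ⟨Finset.mem_union_left _ he₀M, hue₀⟩, ?_⟩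
      rintro e' ⟨he', hve'⟩
      rcases Finset.mem_union.mp he' with h | h
      · exact huniq e' ⟨h, v, hve', hvS⟩
      · exact absurd rfl ((hMS1 e' h).2 v hve').2
    · obtain ⟨e₁, ⟨he₁, hve₁⟩, huniq₁⟩ := hMS2 v hvS hvu
      refine ⟨e₁, ⟨Finset.mem_union_right _ he₁, hve₁⟩, ?_⟩
      rintro e' ⟨he', hve'⟩
      rcases Finset.mem_union.mp he' with h | h
      · exact absurd (key v (huniq e' ⟨h, v, hve', hvS⟩ ▸ hve') hvS) hvu
      · exact huniq₁ e' ⟨h, hve'⟩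
  · obtain ⟨e₁, ⟨he₁, hve₁⟩, huniq₁⟩ := hMcov v hvS
    refine ⟨e₁, ⟨Finset.mem_union_left _ he₁, hve₁⟩, ?_⟩
    rintro e' ⟨he', hve'⟩
    rcases Finset.mem_union.mp he' with h | h
    · exact huniq₁ e' ⟨h, hve'⟩
    · exact absurd ((hMS1 e' h).2 v hve').1 hvS
end
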